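/- Let n ≥ 2, τ ∈ (0,1), X a measurable space, and D a probability measure on X × [n]. Then for every measurable f : X → R^n, er^ℓ_D[pred^CS_τ ∘ f] − er^{ℓ,*}_D ≤ ( er^{ψ^CS}_D[f] − er^{ψ^CS,*}_D ) / ( 2 min(τ, 1−τ) ), where ℓ = ℓ^{1/2} is the abstain(1/2) loss. -/

import Mathlib

open scoped BigOperators
open MeasureTheory

/-- The abstain(1/2) loss is `abstainLoss n (1/2)`. -/
noncomputable def abstainLoss (n : ℕ) (α : ℝ) (y : Fin n) (t : Fin (n + 1)) : ℝ :=
  if t = Fin.last n then α else if (t : ℕ) = (y : ℕ) then 0 else 1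

/-- Crammer–Singer surrogate: `ψ^CS(y,u) = max(0, max_{j≠y} u_j − u_y + 1)`. -/
noncomputable def psiCS (n : ℕ) (y : Fin n) (u : Fin n → ℝ) : ℝ :=
  max ((⨆ j : {j : Fin n // j ≠ y}, u j.1) - u y + 1) 0

/-- The largest component of `u`. -/
noncomputable def top1 (n : ℕ) (u : Fin n → ℝ) : ℝ := ⨆ i, u i

/-- The second-largest component of `u` (descending order, with multiplicity). -/
noncomputable def top2 (n : ℕ) (u : Fin n → ℝ) : ℝ :=
  ⨅ i, ⨆ j : {j : Fin n // j ≠ i}, u j.1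

/-- `pred^CS_τ`: an index attaining `max_i u_i` if `u_(1) − u_(2) > τ` (the maximizer is
unique in this case), and `n+1` otherwise. -/
noncomputable def predCS (n : ℕ) (τ : ℝ) (u : Fin n → ℝ) : Fin (n + 1) :=
  if h : (τ < top1 n u - top2 n u) ∧ ∃ y : Fin n, ∀ i, u i ≤ u y then
    Fin.castSucc h.2.choose
  else Fin.last n

open scoped ENNReal ProbabilityTheory

namespace CSAux

variable {n : ℕ}

lemma nonempty_fin (hn : 2 ≤ n) : Nonempty (Fin n) :=
  Fin.pos_iff_nonempty.mp (by omega)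

lemma nonempty_ne (hn : 2 ≤ n) (y : Fin n) : Nonempty {j : Fin n // j ≠ y} := by
  haveI : Nontrivial (Fin n) := Fin.nontrivial_iff_two_le.mpr hn
  obtain ⟨j, hj⟩ := exists_ne y
  exact ⟨⟨j, hj⟩⟩

lemma bdd {ι : Sort*} [Finite ι] (u : ι → ℝ) : BddAbove (Set.range u) :=
  (Set.finite_range u).bddAbove

lemma bddb {ι : Sort*} [Finite ι] (u : ι → ℝ) : BddBelow (Set.range u) :=
  (Set.finite_range u).bddBelow

lemma abstain_last (y : Fin n) : abstainLoss n (1/2) y (Fin.last n) = 1/2 := if_pos rfl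

lemma abstain_castSucc (y i : Fin n) :
    abstainLoss n (1/2) y (Fin.castSucc i) = if y = i then 0 else 1 := by
  rw [abstainLoss, if_neg (Fin.castSucc_lt_last i).ne]
  simp only [Fin.coe_castSucc]
  by_cases h : y = i
  · simp [h]
  · rw [if_neg (by simpa [Fin.val_eq_val] using Ne.symm h), if_neg h]

lemma abstain_nonneg (y : Fin n) (t : Fin (n+1)) : 0 ≤ abstainLoss n (1/2) y t := by
  rw [abstainLoss]; split
  · norm_num
  · split <;> norm_num

lemma psi_nonneg (y : Fin n) (u : Fin n → ℝ) : 0 ≤ psiCS n y u := le_max_right _ _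

lemma top1_eq {u : Fin n → ℝ} {i : Fin n} (hi : ∀ j, u j ≤ u i) : top1 n u = u i := by
  haveI : Nonempty (Fin n) := ⟨i⟩
  exact le_antisymm (ciSup_le hi) (le_ciSup (bdd u) i)

lemma top2_eq (hn : 2 ≤ n) {u : Fin n → ℝ} {i : Fin n} (hi : ∀ j, u j ≤ u i) :
    top2 n u = ⨆ j : {j : Fin n // j ≠ i}, u j.1 := by
  haveI := nonempty_fin hn
  refine le_antisymm (ciInf_le (bddb _) i) (le_ciInf fun k => ?_)
  by_cases hk : k = i
  · subst hk; exact le_rfl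
  · haveI := nonempty_ne hn i
    haveI := nonempty_ne hn k
    refine ciSup_le fun j => ?_
    calc u j.1 ≤ u i := hi _
      _ ≤ ⨆ j : {j : Fin n // j ≠ k}, u j.1 := le_ciSup (bdd fun j : {j : Fin n // j ≠ k} => u j.1) ⟨i, Ne.symm hk⟩

lemma psi_argmax_ge {u : Fin n → ℝ} {i : Fin n} :
    1 - (u i - ⨆ j : {j : Fin n // j ≠ i}, u j.1) ≤ psiCS n i u := by
  rw [psiCS]
  have := le_max_left ((⨆ j : {j : Fin n // j ≠ i}, u j.1) - u i + 1) 0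
  linarith

lemma psi_ne_ge (hn : 2 ≤ n) {u : Fin n → ℝ} {i y : Fin n} (hi : ∀ j, u j ≤ u i)
    (hy : y ≠ i) :
    1 + (u i - ⨆ j : {j : Fin n // j ≠ i}, u j.1) ≤ psiCS n y u := by
  haveI := nonempty_ne hn y
  haveI := nonempty_ne hn i
  have h1 : u i ≤ ⨆ j : {j : Fin n // j ≠ y}, u j.1 := le_ciSup (bdd fun j : {j : Fin n // j ≠ y} => u j.1) ⟨i, Ne.symm hy⟩
  have h2 : u y ≤ ⨆ j : {j : Fin n // j ≠ i}, u j.1 := le_ciSup (bdd fun j : {j : Fin n // j ≠ i} => u j.1) ⟨y, hy⟩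
  rw [psiCS]
  have := le_max_left ((⨆ j : {j : Fin n // j ≠ y}, u j.1) - u y + 1) 0
  linarith

lemma sum_mul_ite (p : Fin n → ℝ) (hp1 : ∑ y, p y = 1) (i : Fin n) (a b : ℝ) :
    ∑ y, p y * (if y = i then a else b) = b + p i * (a - b) := by
  have h : ∀ y : Fin n, p y * (if y = i then a else b)
      = b * p y + (a - b) * (if y = i then p y else 0) := by
    intro y; by_cases h : y = i <;> simp [h] <;> ring
  rw [Finset.sum_congr rfl fun y _ => h y, Finset.sum_add_distrib, ← Finset.mul_sum, hp1,
    ← Finset.mul_sum, Finset.sum_ite_eq' Finset.univ i p]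
  simp only [Finset.mem_univ, if_true, mul_one]
  ring

lemma sum_risk_last (p : Fin n → ℝ) (hp1 : ∑ y, p y = 1) :
    ∑ y, p y * abstainLoss n (1/2) y (Fin.last n) = 1/2 := by
  simp only [abstain_last]
  rw [← Finset.sum_mul, hp1, one_mul]

lemma sum_risk_cast (p : Fin n → ℝ) (hp1 : ∑ y, p y = 1) (i : Fin n) :
    ∑ y, p y * abstainLoss n (1/2) y (Fin.castSucc i) = 1 - p i := by
  simp only [abstain_castSucc]
  rw [sum_mul_ite p hp1 i 0 1]; ring

lemma K1 (hn : 2 ≤ n) (p : Fin n → ℝ) (hp0 : ∀ y, 0 ≤ p y) (hp1 : ∑ y, p y = 1)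
    {u : Fin n → ℝ} {i : Fin n} (hi : ∀ j, u j ≤ u i) :
    1 + (u i - ⨆ j : {j : Fin n // j ≠ i}, u j.1) * (1 - 2 * p i)
      ≤ ∑ y, p y * psiCS n y u := by
  set m2 := ⨆ j : {j : Fin n // j ≠ i}, u j.1 with hm2
  set g := u i - m2 with hg
  have step : ∑ y, p y * (if y = i then 1 - g else 1 + g) ≤ ∑ y, p y * psiCS n y u := by
    refine Finset.sum_le_sum fun y _ => ?_
    by_cases hy : y = i
    · subst hy; rw [if_pos rfl]
      exact mul_le_mul_of_nonneg_left (by simpa [hg, hm2] using psi_argmax_ge (u := u) (i := y)) (hp0 y)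
    · rw [if_neg hy]
      exact mul_le_mul_of_nonneg_left (psi_ne_ge hn hi hy) (hp0 y)
  rw [sum_mul_ite p hp1 i _ _] at step
  have : (1 + g) + p i * ((1 - g) - (1 + g)) = 1 + g * (1 - 2 * p i) := by ring
  linarith

lemma K2 (hn : 2 ≤ n) (p : Fin n → ℝ) (hp0 : ∀ y, 0 ≤ p y) (hp1 : ∑ y, p y = 1)
    {u : Fin n → ℝ} {i : Fin n} (hi : ∀ j, u j ≤ u i) :
    (1 - p i) * (1 + (u i - ⨆ j : {j : Fin n // j ≠ i}, u j.1))
      ≤ ∑ y, p y * psiCS n y u := by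
  set m2 := ⨆ j : {j : Fin n // j ≠ i}, u j.1 with hm2
  set g := u i - m2 with hg
  have step : ∑ y, p y * (if y = i then 0 else 1 + g) ≤ ∑ y, p y * psiCS n y u := by
    refine Finset.sum_le_sum fun y _ => ?_
    by_cases hy : y = i
    · subst hy; rw [if_pos rfl]
      exact mul_le_mul_of_nonneg_left (psi_nonneg _ _) (hp0 y)
    · rw [if_neg hy]
      exact mul_le_mul_of_nonneg_left (psi_ne_ge hn hi hy) (hp0 y)
  rw [sum_mul_ite p hp1 i _ _] at step
  have : (1 + g) + p i * (0 - (1 + g)) = (1 - p i) * (1 + g) := by ring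
  linarith

noncomputable def gp (n : ℕ) (p : Fin n → ℝ) : Fin n → ℝ := fun j => if 1/2 < p j then 1 else 0

lemma gp_mem (p : Fin n → ℝ) (j : Fin n) : gp n p j = 1 ∨ gp n p j = 0 := by
  rw [gp]; split
  · exact Or.inl rfl
  · exact Or.inr rfl

lemma sum_psi_gp_le (hn : 2 ≤ n) (p : Fin n → ℝ) (hp0 : ∀ y, 0 ≤ p y)
    (hp1 : ∑ y, p y = 1) :
    ∑ y, p y * psiCS n y (gp n p) ≤ min 1 (2 * (1 - ⨆ y, p y)) := by
  haveI := nonempty_fin hn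
  have hple : ∀ y, p y ≤ ⨆ y, p y := fun y => le_ciSup (bdd p) y
  obtain ⟨ip, hipeq⟩ := exists_eq_ciSup_of_finite (f := p)
  by_cases hbig : ∃ y₀, 1/2 < p y₀
  · obtain ⟨y₀, hy₀⟩ := hbig
    have hsmall : ∀ j, j ≠ y₀ → p j ≤ 1/2 := by
      intro j hj
      have h2 : ({j, y₀} : Finset (Fin n)).sum p ≤ ∑ y, p y :=
        Finset.sum_le_sum_of_subset_of_nonneg (Finset.subset_univ _) fun y _ _ => hp0 y
      rw [Finset.sum_pair hj, hp1] at h2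
      linarith
    have hgp : ∀ j, gp n p j = if j = y₀ then 1 else 0 := by
      intro j
      show (if 1/2 < p j then (1:ℝ) else 0) = if j = y₀ then 1 else 0
      by_cases hj : j = y₀
      · subst hj; rw [if_pos hy₀, if_pos rfl]
      · rw [if_neg (not_lt.2 (hsmall j hj)), if_neg hj]
    have hpsi : ∀ y, psiCS n y (gp n p) = if y = y₀ then 0 else 2 := by
      intro y
      haveI := nonempty_ne hn y
      by_cases hy : y = y₀
      · subst hy
        have hsup : (⨆ j : {j : Fin n // j ≠ y}, gp n p j.1) = 0 := by
          refine le_antisymm (ciSup_le fun j => ?_) ?_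
          · rw [hgp]; simp [j.2]
          · obtain ⟨j⟩ := nonempty_ne hn y
            refine le_ciSup_of_le (bdd fun j : {j : Fin n // j ≠ y} => gp n p j.1) j ?_
            rw [hgp]; simp [j.2]
        rw [psiCS, hsup, hgp y, if_pos rfl, if_pos rfl]
        norm_num
      · have hsup : (⨆ j : {j : Fin n // j ≠ y}, gp n p j.1) = 1 := by
          refine le_antisymm (ciSup_le fun j => ?_) ?_
          · rw [hgp]; split <;> norm_num
          · refine le_ciSup_of_le (bdd fun j : {j : Fin n // j ≠ y} => gp n p j.1)
              ⟨y₀, Ne.symm hy⟩ ?_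
            rw [hgp]; simp
        rw [psiCS, hsup, hgp y, if_neg hy, if_neg hy]
        norm_num
    rw [Finset.sum_congr rfl fun y _ => by rw [hpsi y], sum_mul_ite p hp1 y₀ 0 2]
    have hstar : (⨆ y, p y) = p y₀ := by
      rcases eq_or_ne ip y₀ with h | h
      · rw [← hipeq, h]
      · have h1 : p y₀ ≤ p ip := by rw [hipeq]; exact hple y₀
        have h2 := hsmall ip h
        exact absurd hy₀ (by linarith)
    rw [hstar, min_eq_right (by linarith)]
    linarith
  · push_neg at hbig
    have hgp : ∀ j, gp n p j = 0 := fun j => by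
      show (if 1/2 < p j then (1:ℝ) else 0) = 0
      rw [if_neg (not_lt.2 (hbig j))]
    have hpsi : ∀ y, psiCS n y (gp n p) = 1 := by
      intro y
      haveI := nonempty_ne hn y
      have hsup : (⨆ j : {j : Fin n // j ≠ y}, gp n p j.1) = 0 := by
        simp only [hgp]; exact ciSup_const
      rw [psiCS, hsup, hgp y]
      norm_num
    rw [Finset.sum_congr rfl fun y _ => by rw [hpsi y, mul_one], hp1]
    have hP : (⨆ y, p y) ≤ 1/2 := by rw [← hipeq]; exact hbig ip
    exact le_min le_rfl (by linarith)

lemma predCS_eq_last {τ : ℝ} {u : Fin n → ℝ} (h : top1 n u - top2 n u ≤ τ) :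
    predCS n τ u = Fin.last n := by
  rw [predCS, dif_neg]
  rintro ⟨h1, -⟩
  exact absurd h1 (not_lt.2 h)

lemma predCS_eq_castSucc (hn : 2 ≤ n) {τ : ℝ} (hτ0 : 0 < τ) {u : Fin n → ℝ} {i : Fin n}
    (hi : ∀ j, u j ≤ u i) (h : τ < top1 n u - top2 n u) :
    predCS n τ u = Fin.castSucc i := by
  have hex : ∃ y : Fin n, ∀ k, u k ≤ u y := ⟨i, hi⟩
  rw [predCS, dif_pos ⟨h, hex⟩]
  have hj : ∀ k, u k ≤ u hex.choose := hex.choose_spec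
  refine congrArg Fin.castSucc (show hex.choose = i from ?_)
  by_contra hne
  have huji : u hex.choose = u i := le_antisymm (hi _) (hj i)
  have h2 : top1 n u ≤ top2 n u := by
    rw [top1_eq hi, top2_eq hn hi]
    calc u i = u hex.choose := huji.symm
      _ ≤ ⨆ k : {k : Fin n // k ≠ i}, u k.1 :=
        le_ciSup (bdd fun k : {k : Fin n // k ≠ i} => u k.1) ⟨hex.choose, hne⟩
  linarith

lemma predCS_eq_castSucc_iff (hn : 2 ≤ n) {τ : ℝ} (hτ0 : 0 < τ) {u : Fin n → ℝ}
    (t : Fin n) :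
    predCS n τ u = Fin.castSucc t ↔ ∀ j, j ≠ t → u j + τ < u t := by
  constructor
  · intro h
    by_cases hc : (τ < top1 n u - top2 n u) ∧ ∃ y : Fin n, ∀ i, u i ≤ u y
    · rw [predCS, dif_pos hc] at h
      have ht : hc.2.choose = t := Fin.castSucc_injective n h
      have hmax : ∀ k, u k ≤ u t := ht ▸ hc.2.choose_spec
      intro j hj
      have h1 : top1 n u = u t := top1_eq hmax
      have h3 : u j ≤ top2 n u := by
        rw [top2_eq hn hmax]
        exact le_ciSup (bdd fun k : {k : Fin n // k ≠ t} => u k.1) ⟨j, hj⟩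
      have := hc.1
      rw [h1] at this
      linarith
    · rw [predCS, dif_neg hc] at h
      exact absurd h.symm (Fin.castSucc_lt_last t).ne
  · intro hj
    have hmax : ∀ k, u k ≤ u t := by
      intro k
      by_cases hk : k = t
      · subst hk; exact le_rfl
      · linarith [hj k hk]
    haveI := nonempty_ne hn t
    obtain ⟨j₀, hmax2⟩ := Finite.exists_max fun k : {k : Fin n // k ≠ t} => u k.1
    have h2 : top2 n u = u j₀.1 := by
      rw [top2_eq hn hmax]
      exact le_antisymm (ciSup_le fun k => hmax2 k)
        (le_ciSup (bdd fun k : {k : Fin n // k ≠ t} => u k.1) j₀)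
    have hgap : τ < top1 n u - top2 n u := by
      rw [top1_eq hmax, h2]
      linarith [hj j₀.1 j₀.2]
    exact predCS_eq_castSucc hn hτ0 hmax hgap

lemma risk_ge_min (hn : 2 ≤ n) (p : Fin n → ℝ) (hp0 : ∀ y, 0 ≤ p y)
    (hp1 : ∑ y, p y = 1) (t : Fin (n+1)) :
    min (1 - ⨆ y, p y) (1/2) ≤ ∑ y, p y * abstainLoss n (1/2) y t := by
  haveI := nonempty_fin hn
  rcases Fin.eq_castSucc_or_eq_last t with ⟨i, rfl⟩ | rfl
  · rw [sum_risk_cast p hp1 i]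
    have h1 : p i ≤ ⨆ y, p y := le_ciSup (bdd p) i
    have := min_le_left (1 - ⨆ y, p y) (1/2)
    linarith
  · rw [sum_risk_last p hp1]
    exact min_le_right _ _

set_option maxHeartbeats 1000000 in
lemma main_pointwise (hn : 2 ≤ n) {τ : ℝ} (hτ0 : 0 < τ) (hτ1 : τ < 1)
    (p : Fin n → ℝ) (hp0 : ∀ y, 0 ≤ p y) (hp1 : ∑ y, p y = 1) (u : Fin n → ℝ) :
    2 * min τ (1 - τ) * (∑ y, p y * abstainLoss n (1/2) y (predCS n τ u))
      + ∑ y, p y * psiCS n y (gp n p)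
    ≤ (∑ y, p y * psiCS n y u)
      + 2 * min τ (1 - τ) * min (1 - ⨆ y, p y) (1/2) := by
  haveI := nonempty_fin hn
  set m := min τ (1 - τ) with hm
  have hm0 : 0 < m := lt_min hτ0 (by linarith)
  have hmτ : m ≤ τ := min_le_left _ _
  have hmτ' : m ≤ 1 - τ := min_le_right _ _
  set P := ⨆ y, p y with hP
  obtain ⟨ip, hipeq⟩ := exists_eq_ciSup_of_finite (f := p)
  have hple : ∀ y, p y ≤ P := fun y => le_ciSup (bdd p) y
  have hP1 : P ≤ 1 := by
    rw [hP, ← hipeq]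
    exact le_of_le_of_eq (Finset.single_le_sum (fun y _ => hp0 y) (Finset.mem_univ ip)) hp1
  obtain ⟨i, hi⟩ := Finite.exists_max u
  set m2 := ⨆ j : {j : Fin n // j ≠ i}, u j.1 with hm2
  set g := u i - m2 with hg
  have hg0 : 0 ≤ g := by
    haveI := nonempty_ne hn i
    have : m2 ≤ u i := ciSup_le fun j => hi j.1
    rw [hg]; linarith
  have hK1 : 1 + g * (1 - 2 * p i) ≤ ∑ y, p y * psiCS n y u := K1 hn p hp0 hp1 hi
  have hK2 : (1 - p i) * (1 + g) ≤ ∑ y, p y * psiCS n y u := K2 hn p hp0 hp1 hi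
  have hgpb : ∑ y, p y * psiCS n y (gp n p) ≤ min 1 (2 * (1 - P)) :=
    sum_psi_gp_le hn p hp0 hp1
  have hpi : p i ≤ P := hple i
  have hpi0 : 0 ≤ p i := hp0 i
  have htop : top1 n u - top2 n u = g := by rw [top1_eq hi, top2_eq hn hi]
  set S := ∑ y, p y * psiCS n y u with hS
  set Gp := ∑ y, p y * psiCS n y (gp n p) with hGp
  by_cases hgap : τ < top1 n u - top2 n u
  · rw [predCS_eq_castSucc hn hτ0 hi hgap, sum_risk_cast p hp1 i]
    rw [htop] at hgap
    rcases le_or_gt P (1/2) with hP2 | hP2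
    · rw [min_eq_right (by linarith : (1:ℝ)/2 ≤ 1 - P)]
      have hGp1 : Gp ≤ 1 := hgpb.trans (min_le_left _ _)
      have hstep : m * (1 - 2 * p i) ≤ g * (1 - 2 * p i) :=
        mul_le_mul_of_nonneg_right (hmτ.trans hgap.le) (by linarith)
      linarith
    · rw [min_eq_left (by linarith : 1 - P ≤ (1:ℝ)/2)]
      have hGp1 : Gp ≤ 2 * (1 - P) := hgpb.trans (min_le_right _ _)
      rcases le_or_gt 1 g with hg1 | hg1
      · nlinarith [mul_nonneg (by linarith : (0:ℝ) ≤ 1 - p i) (by linarith : (0:ℝ) ≤ g - 1),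
          mul_nonneg (by linarith : (0:ℝ) ≤ 1 - m) (by linarith : (0:ℝ) ≤ P - p i)]
      · nlinarith [mul_nonneg (by linarith : (0:ℝ) ≤ 1 - g) (by linarith : (0:ℝ) ≤ 2 * P - 1),
          mul_nonneg (by linarith : (0:ℝ) ≤ P - p i) (by linarith : (0:ℝ) ≤ g - m)]
  · push_neg at hgap
    rw [predCS_eq_last (htop ▸ hgap), sum_risk_last p hp1]
    rw [htop] at hgap
    rcases le_or_gt P (1/2) with hP2 | hP2
    · rw [min_eq_right (by linarith : (1:ℝ)/2 ≤ 1 - P)]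
      have hGp1 : Gp ≤ 1 := hgpb.trans (min_le_left _ _)
      nlinarith [mul_nonneg hg0 (by linarith : (0:ℝ) ≤ 1 - 2 * p i)]
    · rw [min_eq_left (by linarith : 1 - P ≤ (1:ℝ)/2)]
      have hGp1 : Gp ≤ 2 * (1 - P) := hgpb.trans (min_le_right _ _)
      have hkey : g * (2 * p i - 1) ≤ τ * (2 * P - 1) := by
        rcases le_or_gt (2 * p i - 1) 0 with hs | hs
        · have h1 : g * (2 * p i - 1) ≤ 0 := mul_nonpos_of_nonneg_of_nonpos hg0 hs
          nlinarith
        · calc g * (2 * p i - 1) ≤ τ * (2 * p i - 1) :=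
              mul_le_mul_of_nonneg_right hgap (by linarith)
            _ ≤ τ * (2 * P - 1) := by nlinarith
      nlinarith [mul_nonneg (by linarith : (0:ℝ) ≤ 2 * P - 1)
        (by linarith : (0:ℝ) ≤ 1 - τ - m)]

lemma measurable_ciSup {X : Type*} [MeasurableSpace X] {ι : Type*} [Fintype ι] [Nonempty ι]
    (v : ι → X → ℝ) (hv : ∀ i, Measurable (v i)) :
    Measurable fun x => ⨆ i, v i x := by
  have h2 : (fun x => ⨆ i, v i x) = Finset.univ.sup' Finset.univ_nonempty v := by
    funext x
    rw [Finset.sup'_apply]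
    refine le_antisymm (ciSup_le fun i => Finset.le_sup' (f := fun i => v i x) (Finset.mem_univ i))
      (Finset.sup'_le _ _ fun i _ => le_ciSup (bdd fun i => v i x) i)
  rw [h2]
  exact Finset.measurable_sup' _ fun i _ => hv i

lemma measurable_psi_comp {X : Type*} [MeasurableSpace X] (hn : 2 ≤ n) (y : Fin n)
    {w : X → Fin n → ℝ} (hw : Measurable w) :
    Measurable fun x => psiCS n y (w x) := by
  haveI := nonempty_ne hn y
  have h1 : Measurable fun x => ⨆ j : {j : Fin n // j ≠ y}, w x j.1 :=
    measurable_ciSup _ fun j => (measurable_pi_apply j.1).comp hw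
  have h2 : Measurable fun x => w x y := (measurable_pi_apply y).comp hw
  exact ((h1.sub h2).add_const 1).max measurable_const

lemma measurable_predCS {X : Type*} [MeasurableSpace X] (hn : 2 ≤ n) {τ : ℝ} (hτ0 : 0 < τ)
    {f : X → Fin n → ℝ} (hf : Measurable f) :
    Measurable fun x => predCS n τ (f x) := by
  have hset : ∀ t : Fin n, MeasurableSet {x | predCS n τ (f x) = Fin.castSucc t} := by
    intro t
    have heq : {x | predCS n τ (f x) = Fin.castSucc t}
        = ⋂ j, {x | j ≠ t → f x j + τ < f x t} := by
      ext x
      simp only [Set.mem_setOf_eq, Set.mem_iInter, predCS_eq_castSucc_iff hn hτ0]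
    rw [heq]
    refine MeasurableSet.iInter fun j => ?_
    by_cases hj : j = t
    · have : {x | j ≠ t → f x j + τ < f x t} = Set.univ := by
        ext x; simp [hj]
      rw [this]; exact MeasurableSet.univ
    · have : {x | j ≠ t → f x j + τ < f x t} = {x | f x j + τ < f x t} := by
        ext x; simp [hj]
      rw [this]
      exact measurableSet_lt (((measurable_pi_apply j).comp hf).add_const τ)
        ((measurable_pi_apply t).comp hf)
  apply measurable_to_countable'
  intro c
  rcases Fin.eq_castSucc_or_eq_last c with ⟨t, rfl⟩ | rfl
  · exact hset t
  · have heq : (fun x => predCS n τ (f x)) ⁻¹' {Fin.last n}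
        = (⋃ t : Fin n, {x | predCS n τ (f x) = Fin.castSucc t})ᶜ := by
      ext x
      simp only [Set.mem_preimage, Set.mem_singleton_iff, Set.mem_compl_iff, Set.mem_iUnion,
        Set.mem_setOf_eq]
      constructor
      · rintro h ⟨t, ht⟩
        rw [h] at ht
        exact absurd ht.symm (Fin.castSucc_lt_last t).ne
      · intro h
        rcases Fin.eq_castSucc_or_eq_last (predCS n τ (f x)) with ⟨t, ht⟩ | ht
        · exact absurd ⟨t, ht⟩ h
        · exact ht
    rw [heq]
    exact (MeasurableSet.iUnion fun t => hset t).compl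

lemma ennreal_div_bound {a b c e k : ℝ≥0∞} (hk0 : k ≠ 0) (hk : k ≠ ∞) (he : e ≠ ∞)
    (hb : b ≠ ∞) (h : k * a + e ≤ c + k * b) : a - b ≤ (c - e) / k := by
  rw [ENNReal.le_div_iff_mul_le (Or.inl hk0) (Or.inl hk)]
  rcases le_or_gt e c with hec | hce
  · have h1 : (a - b) * k = a * k - b * k := ENNReal.sub_mul fun _ _ => hk
    rw [h1, tsub_le_iff_right]
    have h2 : c - e + b * k = c + b * k - e := (ENNReal.cancel_of_ne he).tsub_add_eq_add_tsub hec
    rw [h2]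
    refine (ENNReal.cancel_of_ne he).le_tsub_of_add_le_right ?_
    calc a * k + e = k * a + e := by rw [mul_comm]
      _ ≤ c + k * b := h
      _ = c + b * k := by rw [mul_comm k b]
  · have hab : a ≤ b := by
      have h3 : k * a + e < k * b + e := by
        calc k * a + e ≤ c + k * b := h
          _ < e + k * b := by
            refine ENNReal.add_lt_add_right ?_ hce
            exact ENNReal.mul_ne_top hk hb
          _ = k * b + e := by rw [add_comm]
      have h4 : k * a < k * b := by
        rwa [ENNReal.add_lt_add_iff_right he] at h3
      exact ((ENNReal.mul_lt_mul_iff_right hk0 hk).mp h4).le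
    rw [tsub_eq_zero_of_le hab, zero_mul]
    exact zero_le

end CSAux

set_option maxHeartbeats 1000000 in
theorem psiCS_excess_risk_bound (n : ℕ) (hn : 2 ≤ n) (τ : ℝ) (hτ0 : 0 < τ) (hτ1 : τ < 1)
    {X : Type*} [MeasurableSpace X] (D : Measure (X × Fin n)) [IsProbabilityMeasure D]
    (f : X → Fin n → ℝ) (hf : Measurable f) :
    (∫⁻ z, ENNReal.ofReal (abstainLoss n (1/2) z.2 (predCS n τ (f z.1))) ∂D) -
      (⨅ h : {h : X → Fin (n + 1) // Measurable h},
        ∫⁻ z, ENNReal.ofReal (abstainLoss n (1/2) z.2 (h.1 z.1)) ∂D) ≤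
    ((∫⁻ z, ENNReal.ofReal (psiCS n z.2 (f z.1)) ∂D) -
      (⨅ g : {g : X → Fin n → ℝ // Measurable g},
        ∫⁻ z, ENNReal.ofReal (psiCS n z.2 (g.1 z.1)) ∂D)) /
      ENNReal.ofReal (2 * min τ (1 - τ)) := by
  classical
  haveI := CSAux.nonempty_fin hn
  have hm0 : 0 < min τ (1 - τ) := lt_min hτ0 (by linarith)
  have hκR0 : 0 < 2 * min τ (1 - τ) := by linarith
  set k : ℝ≥0∞ := ENNReal.ofReal (2 * min τ (1 - τ)) with hkdef
  have hk0 : k ≠ 0 := by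
    rw [hkdef, Ne, ENNReal.ofReal_eq_zero, not_le]; exact hκR0
  have hktop : k ≠ ∞ := ENNReal.ofReal_ne_top
  set ν := D.fst with hν
  set K := D.condKernel with hK
  have hD : ν ⊗ₘ K = D := D.disintegrate D.condKernel
  set ρ : X → Fin n → ℝ := fun x y => (K x {y}).toReal with hρ
  have hρ0 : ∀ x y, 0 ≤ ρ x y := fun x y => ENNReal.toReal_nonneg
  have hρmeas : ∀ y : Fin n, Measurable fun x => ρ x y := fun y =>
    (K.measurable_coe (measurableSet_singleton y)).ennreal_toReal
  have hρ1 : ∀ x, ∑ y, ρ x y = 1 := by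
    intro x
    have h2 := lintegral_fintype (μ := K x) fun _ => (1 : ℝ≥0∞)
    rw [lintegral_one, measure_univ] at h2
    simp only [one_mul] at h2
    calc ∑ y, ρ x y = (∑ y, K x {y}).toReal :=
          (ENNReal.toReal_sum fun y _ => measure_ne_top _ _).symm
      _ = 1 := by rw [← h2, ENNReal.toReal_one]
  have hKy : ∀ x (y : Fin n), K x {y} = ENNReal.ofReal (ρ x y) := fun x y =>
    (ENNReal.ofReal_toReal (measure_ne_top _ _)).symm
  -- inner integral computation
  have inner : ∀ (F : X → Fin n → ℝ), (∀ x y, 0 ≤ F x y) → ∀ x,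
      ∫⁻ y, ENNReal.ofReal (F x y) ∂(K x) = ENNReal.ofReal (∑ y, ρ x y * F x y) := by
    intro F hF x
    rw [lintegral_fintype,
      ENNReal.ofReal_sum_of_nonneg fun y _ => mul_nonneg (hρ0 x y) (hF x y)]
    refine Finset.sum_congr rfl fun y _ => ?_
    rw [hKy x y, ← ENNReal.ofReal_mul (hF x y), mul_comm]
  -- measurability of integrands
  have hmeasP : Measurable fun x => predCS n τ (f x) := CSAux.measurable_predCS hn hτ0 hf
  have hFA : Measurable fun z : X × Fin n =>
      ENNReal.ofReal (abstainLoss n (1/2) z.2 (predCS n τ (f z.1))) :=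
    measurable_from_prod_countable_left fun y =>
      (((measurable_of_countable fun t : Fin (n+1) => abstainLoss n (1/2) y t).comp
        hmeasP)).ennreal_ofReal
  have hFpsi : ∀ (w : X → Fin n → ℝ), Measurable w →
      Measurable fun z : X × Fin n => ENNReal.ofReal (psiCS n z.2 (w z.1)) := fun w hw =>
    measurable_from_prod_countable_left fun y => (CSAux.measurable_psi_comp hn y hw).ennreal_ofReal
  have hFl : ∀ (h : X → Fin (n+1)), Measurable h →
      Measurable fun z : X × Fin n =>
        ENNReal.ofReal (abstainLoss n (1/2) z.2 (h z.1)) := fun h hh =>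
    measurable_from_prod_countable_left fun y =>
      ((measurable_of_countable fun t : Fin (n+1) => abstainLoss n (1/2) y t).comp
        hh).ennreal_ofReal
  -- disintegration
  have disint : ∀ (F : X × Fin n → ℝ≥0∞), Measurable F →
      ∫⁻ z, F z ∂D = ∫⁻ x, ∫⁻ y, F (x, y) ∂(K x) ∂ν := by
    intro F hFm
    rw [← hD, Measure.lintegral_compProd hFm]
  -- lower bound for the Bayes abstain risk
  have hB : (∫⁻ x, ENNReal.ofReal (min (1 - ⨆ y, ρ x y) (1/2)) ∂ν)
      ≤ ⨅ h : {h : X → Fin (n + 1) // Measurable h},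
        ∫⁻ z, ENNReal.ofReal (abstainLoss n (1/2) z.2 (h.1 z.1)) ∂D := by
    refine le_iInf fun h => ?_
    rw [disint _ (hFl h.1 h.2)]
    refine lintegral_mono fun x => ?_
    rw [inner (fun x y => abstainLoss n (1/2) y (h.1 x)) (fun x y => CSAux.abstain_nonneg y _) x]
    exact ENNReal.ofReal_le_ofReal (CSAux.risk_ge_min hn (ρ x) (hρ0 x) (hρ1 x) (h.1 x))
  -- upper bound for the Bayes surrogate risk
  set G : X → Fin n → ℝ := fun x => CSAux.gp n (ρ x) with hGdef
  have hGmeas : Measurable G := by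
    refine measurable_pi_lambda _ fun j => ?_
    have hGj : (fun x => G x j) = fun x => if 1/2 < ρ x j then (1:ℝ) else 0 := rfl
    rw [hGj]
    exact Measurable.ite (measurableSet_lt measurable_const (hρmeas j)) measurable_const
      measurable_const
  have hE : (⨅ g : {g : X → Fin n → ℝ // Measurable g},
        ∫⁻ z, ENNReal.ofReal (psiCS n z.2 (g.1 z.1)) ∂D)
      ≤ ∫⁻ x, ENNReal.ofReal (∑ y, ρ x y * psiCS n y (CSAux.gp n (ρ x))) ∂ν := by
    refine le_trans (iInf_le _ ⟨G, hGmeas⟩) ?_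
    rw [disint _ (hFpsi G hGmeas)]
    refine le_of_eq (lintegral_congr fun x => ?_)
    exact inner (fun x y => psiCS n y (G x)) (fun x y => CSAux.psi_nonneg _ _) x
  -- finiteness
  have hB0fin : (∫⁻ x, ENNReal.ofReal (min (1 - ⨆ y, ρ x y) (1/2)) ∂ν) ≠ ∞ := by
    refine (lt_of_le_of_lt (lintegral_mono fun x =>
      ENNReal.ofReal_le_ofReal (min_le_right _ _)) ?_).ne
    rw [lintegral_const]
    exact ENNReal.mul_lt_top ENNReal.ofReal_lt_top (measure_lt_top _ _)
  have hE0fin : (∫⁻ x, ENNReal.ofReal (∑ y, ρ x y * psiCS n y (CSAux.gp n (ρ x))) ∂ν) ≠ ∞ := by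
    refine (lt_of_le_of_lt (lintegral_mono fun x => ENNReal.ofReal_le_ofReal
      ((CSAux.sum_psi_gp_le hn (ρ x) (hρ0 x) (hρ1 x)).trans (min_le_left _ _))) ?_).ne
    rw [lintegral_const]
    exact ENNReal.mul_lt_top ENNReal.ofReal_lt_top (measure_lt_top _ _)
  -- rewrite A
  have hAx : (∫⁻ z, ENNReal.ofReal (abstainLoss n (1/2) z.2 (predCS n τ (f z.1))) ∂D)
      = ∫⁻ x, ENNReal.ofReal (∑ y, ρ x y * abstainLoss n (1/2) y (predCS n τ (f x))) ∂ν := by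
    rw [disint _ hFA]
    exact lintegral_congr fun x =>
      inner (fun x y => abstainLoss n (1/2) y (predCS n τ (f x)))
        (fun x y => CSAux.abstain_nonneg y _) x
  have hCx : (∫⁻ z, ENNReal.ofReal (psiCS n z.2 (f z.1)) ∂D)
      = ∫⁻ x, ∫⁻ y, ENNReal.ofReal (psiCS n y (f x)) ∂(K x) ∂ν := disint _ (hFpsi f hf)
  have hameas : Measurable fun x =>
      ENNReal.ofReal (∑ y, ρ x y * abstainLoss n (1/2) y (predCS n τ (f x))) := by
    refine Measurable.ennreal_ofReal (Finset.measurable_sum _ fun y _ => ?_)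
    exact (hρmeas y).mul
      ((measurable_of_countable fun t : Fin (n+1) => abstainLoss n (1/2) y t).comp hmeasP)
  have hcmeas : Measurable fun x => ∫⁻ y, ENNReal.ofReal (psiCS n y (f x)) ∂(K x) :=
    Measurable.lintegral_kernel_prod_right (hFpsi f hf)
  -- the central inequality
  have hcentral :
      k * (∫⁻ z, ENNReal.ofReal (abstainLoss n (1/2) z.2 (predCS n τ (f z.1))) ∂D)
        + (∫⁻ x, ENNReal.ofReal (∑ y, ρ x y * psiCS n y (CSAux.gp n (ρ x))) ∂ν)
      ≤ (∫⁻ z, ENNReal.ofReal (psiCS n z.2 (f z.1)) ∂D)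
        + k * (∫⁻ x, ENNReal.ofReal (min (1 - ⨆ y, ρ x y) (1/2)) ∂ν) := by
    rw [hAx, hCx, ← lintegral_const_mul' k _ hktop, ← lintegral_const_mul' k _ hktop,
      ← lintegral_add_left (hameas.const_mul k), ← lintegral_add_left hcmeas]
    refine lintegral_mono fun x => ?_
    rw [inner (fun x y => psiCS n y (f x)) (fun x y => CSAux.psi_nonneg _ _) x]
    have hsum1 : 0 ≤ ∑ y, ρ x y * abstainLoss n (1/2) y (predCS n τ (f x)) :=
      Finset.sum_nonneg fun y _ => mul_nonneg (hρ0 x y) (CSAux.abstain_nonneg y _)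
    have hsum2 : 0 ≤ ∑ y, ρ x y * psiCS n y (CSAux.gp n (ρ x)) :=
      Finset.sum_nonneg fun y _ => mul_nonneg (hρ0 x y) (CSAux.psi_nonneg _ _)
    have hsum3 : 0 ≤ ∑ y, ρ x y * psiCS n y (f x) :=
      Finset.sum_nonneg fun y _ => mul_nonneg (hρ0 x y) (CSAux.psi_nonneg _ _)
    have hmin0 : 0 ≤ min (1 - ⨆ y, ρ x y) (1/2) := by
      refine le_min ?_ (by norm_num)
      have hle1 : (⨆ y, ρ x y) ≤ 1 := by
        refine ciSup_le fun y => ?_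
        calc ρ x y ≤ ∑ y', ρ x y' :=
              Finset.single_le_sum (fun y' _ => hρ0 x y') (Finset.mem_univ y)
          _ = 1 := hρ1 x
      linarith
    rw [hkdef, ← ENNReal.ofReal_mul hκR0.le, ← ENNReal.ofReal_mul hκR0.le,
      ← ENNReal.ofReal_add (mul_nonneg hκR0.le hsum1) hsum2,
      ← ENNReal.ofReal_add hsum3 (mul_nonneg hκR0.le hmin0)]
    exact ENNReal.ofReal_le_ofReal
      (CSAux.main_pointwise hn hτ0 hτ1 (ρ x) (hρ0 x) (hρ1 x) (f x))
  calc (∫⁻ z, ENNReal.ofReal (abstainLoss n (1/2) z.2 (predCS n τ (f z.1))) ∂D) -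
      (⨅ h : {h : X → Fin (n + 1) // Measurable h},
        ∫⁻ z, ENNReal.ofReal (abstainLoss n (1/2) z.2 (h.1 z.1)) ∂D)
      ≤ (∫⁻ z, ENNReal.ofReal (abstainLoss n (1/2) z.2 (predCS n τ (f z.1))) ∂D) -
        (∫⁻ x, ENNReal.ofReal (min (1 - ⨆ y, ρ x y) (1/2)) ∂ν) := tsub_le_tsub_left hB _
    _ ≤ ((∫⁻ z, ENNReal.ofReal (psiCS n z.2 (f z.1)) ∂D) -
        (∫⁻ x, ENNReal.ofReal (∑ y, ρ x y * psiCS n y (CSAux.gp n (ρ x))) ∂ν)) / k :=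
      CSAux.ennreal_div_bound hk0 hktop hE0fin hB0fin hcentral
    _ ≤ _ := by
      exact ENNReal.div_le_div_right (tsub_le_tsub_left hE _) k
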